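/- For every natural number n ≥ 1, the integral over [0,∞) of ((L_n(x) - L_n(0))/x)^2 e^{-x} dx equals 2n - H_n, where L_k denotes the k-th Laguerre polynomial and H_n = 1 + 1/2 + ... + 1/n is the n-th harmonic number. -/

import Mathlib

open MeasureTheory Real Finset

/-- The Laguerre polynomials `L_n(x) = ∑_{k=0}^n ((-1)^k / k!) C(n,k) x^k`. -/
noncomputable def laguerreL (n : ℕ) (x : ℝ) : ℝ :=
  ∑ k ∈ Finset.range (n + 1), (-1 : ℝ) ^ k / (k.factorial : ℝ) * (n.choose k : ℝ) * x ^ k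

/-- The harmonic number `H_n = 1 + 1/2 + ⋯ + 1/n`. -/
noncomputable def harmonicNum (n : ℕ) : ℝ := ∑ j ∈ Finset.Icc 1 n, (1 : ℝ) / j

/-- `S n a m = ∑_{k=0}^n (-1)^k C(n,k) C(a+k,m)` -/
def Svan (n a m : ℕ) : ℤ :=
  ∑ k ∈ Finset.range (n+1), (-1:ℤ)^k * (n.choose k) * ((a+k).choose m)

lemma Svan_rec (n a m : ℕ) : Svan (n+1) a m = Svan n a m - Svan n (a+1) m := by
  have hpt : ∀ k, (-1:ℤ)^(k+1) * (n.choose (k+1)) * ((a+(k+1)).choose m)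
      = -((-1:ℤ)^k * (n.choose (k+1)) * ((a+1+k).choose m)) := by
    intro k
    have h : a + (k+1) = a + 1 + k := by ring
    rw [h]; ring
  have hB : ∑ k ∈ Finset.range (n+1), (-1:ℤ)^k * (n.choose (k+1)) * ((a+1+k).choose m)
      = (a.choose m : ℤ) - Svan n a m := by
    unfold Svan
    rw [Finset.sum_range_succ (fun k => (-1:ℤ)^k * (n.choose (k+1)) * ((a+1+k).choose m)) n,
        Finset.sum_range_succ' (fun k => (-1:ℤ)^k * (n.choose k) * ((a+k).choose m)) n]
    simp only [Nat.choose_succ_self, Nat.cast_zero, mul_zero, zero_mul, add_zero,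
      pow_zero, Nat.choose_zero_right, Nat.cast_one, one_mul, Nat.add_zero]
    rw [Finset.sum_congr rfl (fun k _ => hpt k), Finset.sum_neg_distrib]
    ring
  have hpt2 : ∀ k, (-1:ℤ)^(k+1) * ((n+1).choose (k+1)) * ((a+(k+1)).choose m)
      = -((-1:ℤ)^k * (n.choose k) * ((a+1+k).choose m))
        - ((-1:ℤ)^k * (n.choose (k+1)) * ((a+1+k).choose m)) := by
    intro k
    rw [Nat.choose_succ_succ]
    have h : a + (k+1) = a + 1 + k := by ring
    rw [h]
    push_cast
    ring
  have hA : ∑ k ∈ Finset.range (n+1), (-1:ℤ)^k * (n.choose k) * ((a+1+k).choose m)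
      = Svan n (a+1) m := rfl
  have key : (∑ k ∈ Finset.range (n+1+1), (-1:ℤ)^k * ((n+1).choose k) * ((a+k).choose m))
      = Svan n a m - Svan n (a+1) m := by
    rw [Finset.sum_range_succ' (fun k => (-1:ℤ)^k * ((n+1).choose k) * ((a+k).choose m)) (n+1)]
    rw [Finset.sum_congr rfl (fun k _ => hpt2 k), Finset.sum_sub_distrib, Finset.sum_neg_distrib]
    rw [hA, hB]
    simp only [pow_zero, Nat.choose_zero_right, Nat.cast_one, one_mul, Nat.add_zero]
    ring
  exact key

lemma Svan_eq_zero : ∀ n a m : ℕ, m < n → Svan n a m = 0 := by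
  intro n
  induction n with
  | zero => intro a m h; omega
  | succ n ih =>
    intro a m hm
    rw [Svan_rec]
    rcases Nat.lt_or_ge m n with h | h
    · rw [ih a m h, ih (a+1) m h, sub_zero]
    · have hmn : m = n := by omega
      subst hmn
      match m, ih with
      | 0, ih => simp [Svan]
      | (m'+1), ih =>
        have expand : Svan (m'+1) (a+1) (m'+1) = Svan (m'+1) a m' + Svan (m'+1) a (m'+1) := by
          unfold Svan
          rw [← Finset.sum_add_distrib]
          apply Finset.sum_congr rfl
          intro k _
          have h : a + 1 + k = (a + k) + 1 := by ring
          rw [h, Nat.choose_succ_succ]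
          push_cast
          ring
        rw [expand, ih a m' (by omega)]
        ring

lemma harmonicNum_succ (n : ℕ) : harmonicNum (n+1) = harmonicNum n + 1/(n+1) := by
  unfold harmonicNum
  rw [Finset.sum_Icc_succ_top (by omega : 1 ≤ n+1)]
  push_cast
  ring

/-- `∑_{k=0}^n (-1)^k C(n,k)/(k+1) = 1/(n+1)` -/
lemma sum_E (n : ℕ) :
    ∑ k ∈ Finset.range (n+1), (-1:ℝ)^k * (n.choose k) / ((k:ℝ)+1) = 1/((n:ℝ)+1) := by
  have hz : ∑ l ∈ Finset.range (n+2), (-1:ℝ)^l * (((n+1).choose l : ℕ) : ℝ) = 0 := by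
    have := Int.alternating_sum_range_choose_of_ne (Nat.succ_ne_zero n)
    exact_mod_cast congrArg (fun z : ℤ => (z : ℝ)) this
  have hpeel : ∑ l ∈ Finset.range (n+2), (-1:ℝ)^l * (((n+1).choose l : ℕ) : ℝ)
      = ∑ k ∈ Finset.range (n+1), (-1:ℝ)^(k+1) * (((n+1).choose (k+1) : ℕ) : ℝ) + 1 := by
    rw [Finset.sum_range_succ' (fun l => (-1:ℝ)^l * (((n+1).choose l : ℕ) : ℝ)) (n+1)]
    simp
  have hsum : ∑ k ∈ Finset.range (n+1), (-1:ℝ)^k * (((n+1).choose (k+1) : ℕ) : ℝ) = 1 := by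
    have h2 : ∑ k ∈ Finset.range (n+1), (-1:ℝ)^(k+1) * (((n+1).choose (k+1) : ℕ) : ℝ) = -1 := by
      rw [hpeel] at hz; linarith
    have h3 : ∑ k ∈ Finset.range (n+1), (-1:ℝ)^(k+1) * (((n+1).choose (k+1) : ℕ) : ℝ)
        = -∑ k ∈ Finset.range (n+1), (-1:ℝ)^k * (((n+1).choose (k+1) : ℕ) : ℝ) := by
      rw [← Finset.sum_neg_distrib]
      exact Finset.sum_congr rfl fun k _ => by ring
    rw [h3] at h2; linarith
  have hterm : ∀ k, (-1:ℝ)^k * (n.choose k) / ((k:ℝ)+1)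
      = (1/((n:ℝ)+1)) * ((-1:ℝ)^k * (((n+1).choose (k+1) : ℕ) : ℝ)) := by
    intro k
    have h := Nat.add_one_mul_choose_eq n k
    have h' : ((n:ℝ)+1) * (n.choose k) = (((n+1).choose (k+1) : ℕ) : ℝ) * ((k:ℝ)+1) := by
      exact_mod_cast congrArg (fun z : ℕ => (z : ℝ)) h
    have hk : ((k:ℝ)+1) ≠ 0 := by positivity
    have hn : ((n:ℝ)+1) ≠ 0 := by positivity
    field_simp
    linear_combination h'
  rw [Finset.sum_congr rfl (fun k _ => hterm k), ← Finset.mul_sum, hsum, mul_one]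

/-- `∑_{k=0}^n (-1)^k C(n,k)/k = -H_n` (with `1/0 = 0` convention). -/
lemma sum_B (n : ℕ) :
    ∑ k ∈ Finset.range (n+1), (-1:ℝ)^k * (n.choose k) / (k:ℝ) = -(harmonicNum n) := by
  induction n with
  | zero => simp [harmonicNum]
  | succ n ih =>
    have hpeel : ∑ k ∈ Finset.range (n+2), (-1:ℝ)^k * ((n+1).choose k) / (k:ℝ)
        = ∑ k ∈ Finset.range (n+1), (-1:ℝ)^(k+1) * ((n+1).choose (k+1)) / ((k:ℝ)+1) := by
      rw [Finset.sum_range_succ' (fun k => (-1:ℝ)^k * ((n+1).choose k) / (k:ℝ)) (n+1)]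
      push_cast
      simp
    have hpt : ∀ k, (-1:ℝ)^(k+1) * ((n+1).choose (k+1)) / ((k:ℝ)+1)
        = -((-1:ℝ)^k * (n.choose k) / ((k:ℝ)+1))
          + (-1:ℝ)^(k+1) * (n.choose (k+1)) / ((k:ℝ)+1) := by
      intro k
      rw [Nat.choose_succ_succ]
      push_cast
      ring
    have hlast : ∑ k ∈ Finset.range (n+1), (-1:ℝ)^(k+1) * (n.choose (k+1)) / ((k:ℝ)+1)
        = ∑ k ∈ Finset.range (n+1), (-1:ℝ)^k * (n.choose k) / (k:ℝ) := by
      rw [Finset.sum_range_succ (fun k => (-1:ℝ)^(k+1) * (n.choose (k+1)) / ((k:ℝ)+1)) n,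
          Finset.sum_range_succ' (fun k => (-1:ℝ)^k * (n.choose k) / (k:ℝ)) n]
      push_cast
      simp [Nat.choose_succ_self]
    rw [hpeel, Finset.sum_congr rfl (fun k _ => hpt k), Finset.sum_add_distrib,
        Finset.sum_neg_distrib, sum_E, hlast, ih, harmonicNum_succ]
    push_cast
    ring

/-- `G(n) = ∑_{k=0}^n (-1)^k C(n,k)/(k(k+1)) = -H_n - 1/(n+1) + 1`. -/
lemma sum_G (n : ℕ) :
    ∑ k ∈ Finset.range (n+1), (-1:ℝ)^k * (n.choose k) / ((k:ℝ)*((k:ℝ)+1))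
      = -(harmonicNum n) - 1/((n:ℝ)+1) + 1 := by
  have hpt : ∀ k ∈ Finset.range (n+1), (-1:ℝ)^k * (n.choose k) / ((k:ℝ)*((k:ℝ)+1))
      = ((-1:ℝ)^k * (n.choose k) / (k:ℝ) - (-1:ℝ)^k * (n.choose k) / ((k:ℝ)+1))
        + (if k = 0 then (1:ℝ) else 0) := by
    intro k _
    rcases Nat.eq_zero_or_pos k with rfl | hk
    · norm_num
    · have hk' : (k:ℝ) ≠ 0 := by positivity
      have hk1 : (k:ℝ)+1 ≠ 0 := by positivity
      rw [if_neg (by omega)]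
      field_simp
      ring
  rw [Finset.sum_congr rfl hpt, Finset.sum_add_distrib, Finset.sum_sub_distrib,
      sum_B, sum_E, Finset.sum_ite_eq' (Finset.range (n+1)) 0 (fun _ => (1:ℝ)),
      if_pos (Finset.mem_range.mpr (by omega))]

/-- `∑_{j=0}^n (-1)^j C(n,j)/(j(j-1)) = (n+1)H_n - 2n`. -/
lemma sum_C (n : ℕ) :
    ∑ j ∈ Finset.range (n+1), (-1:ℝ)^j * (n.choose j) / ((j:ℝ)*((j:ℝ)-1))
      = ((n:ℝ)+1) * harmonicNum n - 2*n := by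
  induction n with
  | zero => simp [harmonicNum]
  | succ n ih =>
    have hpeel : ∑ j ∈ Finset.range (n+2), (-1:ℝ)^j * ((n+1).choose j) / ((j:ℝ)*((j:ℝ)-1))
        = ∑ k ∈ Finset.range (n+1), (-1:ℝ)^(k+1) * ((n+1).choose (k+1)) / (((k:ℝ)+1)*(k:ℝ)) := by
      rw [Finset.sum_range_succ' (fun j => (-1:ℝ)^j * ((n+1).choose j) / ((j:ℝ)*((j:ℝ)-1))) (n+1)]
      push_cast
      simp
    have hpt : ∀ k, (-1:ℝ)^(k+1) * ((n+1).choose (k+1)) / (((k:ℝ)+1)*(k:ℝ))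
        = -((-1:ℝ)^k * (n.choose k) / ((k:ℝ)*((k:ℝ)+1)))
          + (-1:ℝ)^(k+1) * (n.choose (k+1)) / (((k:ℝ)+1)*(k:ℝ)) := by
      intro k
      rw [Nat.choose_succ_succ]
      simp only [Nat.succ_eq_add_one]
      push_cast
      ring
    have hlast : ∑ k ∈ Finset.range (n+1), (-1:ℝ)^(k+1) * (n.choose (k+1)) / (((k:ℝ)+1)*(k:ℝ))
        = ∑ j ∈ Finset.range (n+1), (-1:ℝ)^j * (n.choose j) / ((j:ℝ)*((j:ℝ)-1)) := by
      rw [Finset.sum_range_succ (fun k => (-1:ℝ)^(k+1) * (n.choose (k+1)) / (((k:ℝ)+1)*(k:ℝ))) n,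
          Finset.sum_range_succ' (fun j => (-1:ℝ)^j * (n.choose j) / ((j:ℝ)*((j:ℝ)-1))) n]
      push_cast
      simp [Nat.choose_succ_self]
    rw [hpeel, Finset.sum_congr rfl (fun k _ => hpt k), Finset.sum_add_distrib,
        Finset.sum_neg_distrib, sum_G, hlast, ih, harmonicNum_succ]
    push_cast
    field_simp
    ring

noncomputable def dcoef (n i : ℕ) : ℝ := (-1:ℝ)^(i+1) / ((i+1).factorial : ℝ) * (n.choose (i+1))

/-- inner sum at `i = 0` -/
lemma inner_zero (n : ℕ) :
    ∑ l ∈ Finset.range n, dcoef n l * ((0+l).factorial : ℝ) = -(harmonicNum n) := by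
  rw [← sum_B n, Finset.sum_range_succ' (fun k => (-1:ℝ)^k * (n.choose k) / (k:ℝ)) n]
  simp only [Nat.cast_zero, div_zero, add_zero, zero_add]
  apply Finset.sum_congr rfl
  intro l _
  unfold dcoef
  have hfact : (((l+1).factorial : ℕ) : ℝ) = ((l:ℝ)+1) * (l.factorial : ℝ) := by
    rw [Nat.factorial_succ]; push_cast; ring
  have h1 : (l.factorial : ℝ) ≠ 0 := by positivity
  have h2 : ((l:ℝ)+1) ≠ 0 := by positivity
  rw [hfact]
  push_cast
  field_simp

/-- inner sum at `i = i'+1` with `i'+1 < n` -/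
lemma inner_succ (n i' : ℕ) (hi : i' + 1 < n) :
    ∑ l ∈ Finset.range n, dcoef n l * (((i'+1)+l).factorial : ℝ) = -(i'.factorial : ℝ) := by
  have hfac : ∀ l : ℕ, (((i'+1+l).factorial : ℕ) : ℝ)
      = (((i'+(l+1)).choose i' : ℕ) : ℝ) * (i'.factorial : ℝ) * (((l+1).factorial : ℕ) : ℝ) := by
    intro l
    have h := Nat.choose_mul_factorial_mul_factorial (show i' ≤ i'+(l+1) by omega)
    have h2 : i' + (l+1) - i' = l + 1 := by omega
    rw [h2] at h
    have h3 : i' + 1 + l = i' + (l+1) := by omega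
    rw [h3]
    exact_mod_cast congrArg (fun z : ℕ => (z:ℝ)) h.symm
  have hpt : ∀ l, dcoef n l * (((i'+1)+l).factorial : ℝ)
      = ((-1:ℝ)^(l+1) * (n.choose (l+1)) * (((i'+(l+1)).choose i' : ℕ) : ℝ)) * (i'.factorial : ℝ) := by
    intro l
    unfold dcoef
    rw [hfac l]
    have h4 : (((l+1).factorial : ℕ) : ℝ) ≠ 0 := by positivity
    field_simp
  have hvan : ((Svan n i' i' : ℤ) : ℝ) = 0 := by
    rw [Svan_eq_zero n i' i' (by omega)]; norm_num
  have hS : ((Svan n i' i' : ℤ) : ℝ)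
      = ∑ k ∈ Finset.range (n+1), (-1:ℝ)^k * (n.choose k) * (((i'+k).choose i' : ℕ) : ℝ) := by
    unfold Svan
    push_cast
    rfl
  have hpeel : ∑ k ∈ Finset.range (n+1), (-1:ℝ)^k * (n.choose k) * (((i'+k).choose i' : ℕ) : ℝ)
      = (∑ l ∈ Finset.range n, (-1:ℝ)^(l+1) * (n.choose (l+1)) * (((i'+(l+1)).choose i' : ℕ) : ℝ))
        + 1 := by
    rw [Finset.sum_range_succ' (fun k => (-1:ℝ)^k * (n.choose k) * (((i'+k).choose i' : ℕ) : ℝ)) n]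
    simp
  have hsum : ∑ l ∈ Finset.range n, (-1:ℝ)^(l+1) * (n.choose (l+1)) * (((i'+(l+1)).choose i' : ℕ) : ℝ)
      = -1 := by
    have := hS.symm.trans hvan
    rw [hpeel] at this
    linarith
  rw [Finset.sum_congr rfl (fun l _ => hpt l), ← Finset.sum_mul, hsum]
  ring

/-- the main double sum -/
lemma key_sum (n : ℕ) (hn : 1 ≤ n) :
    ∑ i ∈ Finset.range n, ∑ l ∈ Finset.range n,
      dcoef n i * (dcoef n l * (((i+l).factorial : ℕ) : ℝ))
      = 2*n - harmonicNum n := by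
  have hfac : ∀ i ∈ Finset.range n, (∑ l ∈ Finset.range n,
      dcoef n i * (dcoef n l * (((i+l).factorial : ℕ) : ℝ)))
      = dcoef n i * ∑ l ∈ Finset.range n, dcoef n l * (((i+l).factorial : ℕ) : ℝ) := by
    intro i _
    rw [Finset.mul_sum]
  rw [Finset.sum_congr rfl hfac]
  obtain ⟨n', rfl⟩ : ∃ n', n = n' + 1 := ⟨n - 1, by omega⟩
  rw [Finset.sum_range_succ'
    (fun i => dcoef (n'+1) i * ∑ l ∈ Finset.range (n'+1), dcoef (n'+1) l * (((i+l).factorial : ℕ) : ℝ)) n']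
  rw [inner_zero (n'+1)]
  have hinner : ∀ i' ∈ Finset.range n',
      dcoef (n'+1) (i'+1) * ∑ l ∈ Finset.range (n'+1), dcoef (n'+1) l * ((((i'+1)+l).factorial : ℕ) : ℝ)
      = dcoef (n'+1) (i'+1) * (-(i'.factorial : ℝ)) := by
    intro i' hi'
    rw [inner_succ (n'+1) i' (by simp only [Finset.mem_range] at hi'; omega)]
  rw [Finset.sum_congr rfl hinner]
  -- identify the remaining sum with -S_C(n'+1)
  have hpt3 : ∀ i' : ℕ, dcoef (n'+1) (i'+1) * (-(i'.factorial : ℝ))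
      = -((-1:ℝ)^(i'+2) * (((n'+1).choose (i'+2) : ℕ) : ℝ) / (((i':ℝ)+2)*((i':ℝ)+1))) := by
    intro i'
    unfold dcoef
    have hfact2 : (((i'+2).factorial : ℕ) : ℝ) = ((i':ℝ)+2)*((i':ℝ)+1)*(i'.factorial : ℝ) := by
      show (((i'+1+1).factorial : ℕ) : ℝ) = _
      rw [Nat.factorial_succ, Nat.factorial_succ]
      push_cast
      ring
    have h1 : (i'.factorial : ℝ) ≠ 0 := by positivity
    have h2 : ((i':ℝ)+2) ≠ 0 := by positivity
    have h3 : ((i':ℝ)+1) ≠ 0 := by positivity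
    rw [show i'+1+1 = i'+2 from rfl, hfact2]
    field_simp
  rw [Finset.sum_congr rfl (fun i' _ => hpt3 i')]
  have hC := sum_C (n'+1)
  have hpeel2 : ∑ j ∈ Finset.range (n'+2), (-1:ℝ)^j * (((n'+1).choose j : ℕ) : ℝ) / ((j:ℝ)*((j:ℝ)-1))
      = ∑ i' ∈ Finset.range n',
          (-1:ℝ)^(i'+2) * (((n'+1).choose (i'+2) : ℕ) : ℝ) / (((i':ℝ)+2)*((i':ℝ)+1)) := by
    rw [Finset.sum_range_succ' (fun j => (-1:ℝ)^j * (((n'+1).choose j : ℕ) : ℝ) / ((j:ℝ)*((j:ℝ)-1))) (n'+1)]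
    rw [Finset.sum_range_succ'
      (fun k => (-1:ℝ)^(k+1) * (((n'+1).choose (k+1) : ℕ) : ℝ) / (((k+1:ℕ):ℝ)*(((k+1:ℕ):ℝ)-1))) n']
    push_cast
    norm_num
    apply Finset.sum_congr rfl
    intro i' _
    ring_nf
  have hCsum : ∑ i' ∈ Finset.range n',
      (-1:ℝ)^(i'+2) * (((n'+1).choose (i'+2) : ℕ) : ℝ) / (((i':ℝ)+2)*((i':ℝ)+1))
      = ((n':ℝ)+2) * harmonicNum (n'+1) - 2*((n':ℝ)+1) := by
    rw [← hpeel2]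
    rw [show n'+2 = n'+1+1 from rfl]
    rw [hC]
    push_cast
    ring
  rw [Finset.sum_neg_distrib, hCsum]
  have hd0 : dcoef (n'+1) 0 = -((n':ℝ)+1) := by
    unfold dcoef
    simp [Nat.choose_one_right]
  rw [hd0]
  push_cast
  ring

lemma integrableOn_pow_exp (m : ℕ) :
    IntegrableOn (fun x : ℝ => x ^ m * Real.exp (-x)) (Set.Ioi 0) := by
  have h := Real.GammaIntegral_convergent (show (0:ℝ) < m + 1 by positivity)
  apply h.congr_fun _ measurableSet_Ioi
  intro x hx
  have h1 : ((m:ℝ) + 1) - 1 = (m:ℝ) := by ring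
  simp only [h1, Real.rpow_natCast]
  ring

lemma integral_pow_exp (m : ℕ) :
    ∫ x in Set.Ioi (0:ℝ), x ^ m * Real.exp (-x) = (m.factorial : ℝ) := by
  rw [← Real.Gamma_nat_eq_factorial,
    Real.Gamma_eq_integral (show (0:ℝ) < m + 1 by positivity)]
  apply MeasureTheory.setIntegral_congr_fun measurableSet_Ioi
  intro x hx
  have h1 : ((m:ℝ) + 1) - 1 = (m:ℝ) := by ring
  simp only [h1, Real.rpow_natCast]
  ring

theorem laguerre_filter_integral (n : ℕ) (hn : 1 ≤ n) :
    ∫ x in Set.Ioi (0 : ℝ), ((laguerreL n x - laguerreL n 0) / x) ^ 2 * Real.exp (-x)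
      = 2 * n - harmonicNum n := by
  have hL0 : laguerreL n 0 = 1 := by
    unfold laguerreL
    rw [Finset.sum_eq_single 0]
    · norm_num
    · intro k _ hk
      rw [zero_pow hk, mul_zero]
    · intro h; simp at h
  have hEq : Set.EqOn
      (fun x => ((laguerreL n x - laguerreL n 0) / x) ^ 2 * Real.exp (-x))
      (fun x => ∑ i ∈ Finset.range n, ∑ l ∈ Finset.range n,
        dcoef n i * (dcoef n l * (x ^ (i+l) * Real.exp (-x)))) (Set.Ioi 0) := by
    intro x hx
    have hx0 : (x:ℝ) ≠ 0 := ne_of_gt (Set.mem_Ioi.mp hx)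
    have hsplit : laguerreL n x = (∑ i ∈ Finset.range n, dcoef n i * x ^ (i+1)) + 1 := by
      unfold laguerreL dcoef
      rw [Finset.sum_range_succ'
        (fun k => (-1:ℝ)^k / (k.factorial : ℝ) * (n.choose k : ℝ) * x ^ k) n]
      norm_num
    have hdiv : (laguerreL n x - laguerreL n 0) / x
        = ∑ i ∈ Finset.range n, dcoef n i * x ^ i := by
      rw [hsplit, hL0]
      have : (∑ i ∈ Finset.range n, dcoef n i * x ^ (i+1)) + 1 - 1
          = x * ∑ i ∈ Finset.range n, dcoef n i * x ^ i := by
        rw [Finset.mul_sum]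
        rw [add_sub_cancel_right]
        apply Finset.sum_congr rfl
        intro i _
        rw [pow_succ]
        ring
      rw [this, mul_div_cancel_left₀ _ hx0]
    show ((laguerreL n x - laguerreL n 0) / x) ^ 2 * Real.exp (-x) = _
    rw [hdiv, sq, Finset.sum_mul_sum, Finset.sum_mul]
    apply Finset.sum_congr rfl
    intro i _
    rw [Finset.sum_mul]
    apply Finset.sum_congr rfl
    intro l _
    rw [pow_add]
    ring
  rw [MeasureTheory.setIntegral_congr_fun measurableSet_Ioi hEq]
  have hint : ∀ i l : ℕ, IntegrableOn
      (fun x : ℝ => dcoef n i * (dcoef n l * (x ^ (i+l) * Real.exp (-x)))) (Set.Ioi 0) := by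
    intro i l
    exact (((integrableOn_pow_exp (i+l)).const_mul (dcoef n l)).const_mul (dcoef n i))
  rw [MeasureTheory.integral_finset_sum _ (fun i _ => integrable_finset_sum _ (fun l _ => hint i l))]
  have : ∀ i ∈ Finset.range n,
      (∫ x in Set.Ioi (0:ℝ), ∑ l ∈ Finset.range n,
        dcoef n i * (dcoef n l * (x ^ (i+l) * Real.exp (-x))))
      = ∑ l ∈ Finset.range n, dcoef n i * (dcoef n l * (((i+l).factorial : ℕ) : ℝ)) := by
    intro i _
    rw [MeasureTheory.integral_finset_sum _ (fun l _ => hint i l)]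
    apply Finset.sum_congr rfl
    intro l _
    rw [MeasureTheory.integral_const_mul, MeasureTheory.integral_const_mul, integral_pow_exp]
  rw [Finset.sum_congr rfl this, key_sum n hn]
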